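/- Let G act on Q, H ≤ G, and P ⊆ Q a G-independent set (distinct elements of P lie in distinct G-orbits) such that every q ∈ P satisfies |G·q|/|H·q| = |G|/|H|. Then the branches Qᵢ = Cᵢ(P) over the left cosets Cᵢ of H are pairwise disjoint. -/

import Mathlib

open Pointwise MulAction

lemma os_nat {G Q : Type*} [Group G] [Finite G] [MulAction G Q] (q : Q) :
    Nat.card (orbit G q) * Nat.card (stabilizer G q) = Nat.card G := by
  rw [← Nat.card_prod, Nat.card_congr (orbitProdStabilizerEquivGroup G q)]

lemma stab_le {G Q : Type*} [Group G] [Finite G] [MulAction G Q] (H : Subgroup G) (q : Q)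
    (hwb : Nat.card (orbit G q) / Nat.card (orbit H q) = Nat.card G / Nat.card H) :
    stabilizer G q ≤ H := by
  have hG := os_nat (G := G) q
  have hH := os_nat (G := H) q
  set oG := Nat.card (orbit G q)
  set oH := Nat.card (orbit H q)
  set s := Nat.card (stabilizer G q)
  set t := Nat.card (stabilizer H q)
  -- injection stabilizer H q → stabilizer G q
  have hfinj : Function.Injective
      (fun x : stabilizer H q => (⟨(x : H), x.2⟩ : stabilizer G q)) := by
    intro a b hab
    ext
    exact congrArg (fun y : stabilizer G q => (y : G)) hab
  have hts : t ≤ s := Nat.card_le_card_of_injective _ hfinj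
  have hs : 0 < s := Nat.card_pos
  have ht : 0 < t := Nat.card_pos
  have : Finite (orbit H q) := Set.Finite.to_subtype (Set.finite_range _)
  have : Nonempty (orbit H q) := (nonempty_orbit q).to_subtype
  have hoH : 0 < oH := Nat.card_pos
  have hdvd : Nat.card H ∣ Nat.card G := H.card_subgroup_dvd_card
  have hk : 0 < Nat.card G / Nat.card H :=
    Nat.div_pos (Nat.le_of_dvd Nat.card_pos hdvd) Nat.card_pos
  set k := Nat.card G / Nat.card H with hkdef
  have hGH : Nat.card G = k * Nat.card H := (Nat.div_mul_cancel hdvd).symm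
  -- oG / oH = k  →  oH * k ≤ oG
  have hle : oH * k ≤ oG := by
    rw [← hwb]
    calc oH * (oG / oH) = oG / oH * oH := mul_comm _ _
      _ ≤ oG := Nat.div_mul_le_self _ _
  -- oG * s = k * oH * t
  have heq : oG * s = k * (oH * t) := by
    rw [hG, hH] at *
    omega
  have hst : s ≤ t := by
    nlinarith [hle, heq, hs, ht, hk]
  have hcard : s = t := le_antisymm hst hts
  -- surjectivity
  have hbij : Function.Bijective
      (fun x : stabilizer H q => (⟨(x : H), x.2⟩ : stabilizer G q)) := by
    have : Finite (stabilizer G q) := inferInstance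
    rw [Nat.bijective_iff_injective_and_card]
    exact ⟨hfinj, hcard.symm⟩
  intro g hg
  obtain ⟨x, hx⟩ := hbij.2 ⟨g, hg⟩
  have : ((x : H) : G) = g := congrArg (fun y : stabilizer G q => (y : G)) hx
  rw [← this]; exact (x : H).2

/-- The branch `C(P) = {g • q | g ∈ C, q ∈ P}`. -/
def branch {G Q : Type*} [Group G] [MulAction G Q] (C : Set G) (P : Set Q) : Set Q :=
  {x | ∃ g ∈ C, ∃ q ∈ P, g • q = x}

/-- Let a finite group `G` act on a finite set `Q`, `H ≤ G`, and let `P ⊆ Q` be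
`G`-independent (distinct elements of `P` lie in distinct `G`-orbits) with every `q ∈ P`
well-behaved for `H` (`|G·q|/|H·q| = |G|/|H|`).  Then the branches `Cᵢ(P)` over distinct
left cosets of `H` are pairwise disjoint. -/
theorem branches_pairwise_disjoint (G Q : Type*) [Group G] [Finite G] [MulAction G Q]
    [Finite Q] (H : Subgroup G) (P : Set Q)
    (hindep : ∀ q₁ ∈ P, ∀ q₂ ∈ P, q₁ ≠ q₂ → orbit G q₁ ≠ orbit G q₂)
    (hwb : ∀ q ∈ P,
      Nat.card (orbit G q) / Nat.card (orbit H q) = Nat.card G / Nat.card H) :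
    ∀ g₀ g₁ : G, g₀ • (H : Set G) ≠ g₁ • (H : Set G) →
      Disjoint (branch (g₀ • (H : Set G)) P) (branch (g₁ • (H : Set G)) P) := by
  intro g₀ g₁ hne
  rw [Set.disjoint_left]
  rintro x ⟨a, ha, q₁, hq₁, hx₁⟩ ⟨b, hb, q₂, hq₂, hx₂⟩
  obtain ⟨h₀, hh₀, rfl⟩ := Set.mem_smul_set.mp ha
  obtain ⟨h₁, hh₁, rfl⟩ := Set.mem_smul_set.mp hb
  simp only [smul_eq_mul] at hx₁ hx₂
  have horb : orbit G q₁ = orbit G q₂ := by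
    rw [orbit_eq_iff]
    exact ⟨(g₀ * h₀)⁻¹ * (g₁ * h₁), by
      show ((g₀ * h₀)⁻¹ * (g₁ * h₁)) • q₂ = q₁
      rw [mul_smul, hx₂, ← hx₁, inv_smul_smul]⟩
  have hq : q₁ = q₂ := by
    by_contra hcon
    exact hindep q₁ hq₁ q₂ hq₂ hcon horb
  subst hq
  have hstab : (g₁ * h₁)⁻¹ * (g₀ * h₀) ∈ stabilizer G q₁ := by
    rw [mem_stabilizer_iff, mul_smul, hx₁, ← hx₂, inv_smul_smul]
  have hmem : (g₁ * h₁)⁻¹ * (g₀ * h₀) ∈ H := stab_le H q₁ (hwb q₁ hq₁) hstab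
  apply hne
  symm
  rw [leftCoset_eq_iff]
  have : g₁⁻¹ * g₀ = h₁ * ((g₁ * h₁)⁻¹ * (g₀ * h₀)) * h₀⁻¹ := by group
  rw [this]
  exact H.mul_mem (H.mul_mem hh₁ hmem) (H.inv_mem hh₀)
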